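/- Let q be an odd prime power, n, k positive integers, and M₁, M₂ ∈ F_q^{k×k} with M₁, M₂, and M₁ − M₂ invertible. Suppose A ⊆ (F_q^n)^k contains no triple of pairwise distinct points of the form x, x + M₁d, x + M₂d with x, d ∈ (F_q^n)^k (matrices acting blockwise). Then |A| ≤ 3·c_q^{kn}, where c_q = inf_{0<x<1} (1 − x^q)/(x^{(q−1)/3}(1 − x)). -/

import Mathlib

/-- Blockwise action of a `k × k` matrix over `F` on `(F^n)^k`. -/
def blockAct {F : Type*} [Field F] {k n : ℕ}
    (M : Matrix (Fin k) (Fin k) F) (v : Fin k → (Fin n → F)) : Fin k → (Fin n → F) :=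
  fun j => ∑ s, M j s • v s

namespace EGaux

variable {F : Type*} [Field F] {k n q : ℕ}

abbrev Vkn (F : Type*) [Field F] (k n : ℕ) := Fin k → Fin n → F
abbrev TriFun (F : Type*) [Field F] (k n : ℕ) := Vkn F k n → Vkn F k n → Vkn F k n → F
abbrev Exp (k n : ℕ) := Fin k × Fin n → ℕ

def monV (e : Exp k n) : Vkn F k n → F := fun v => ∏ p, v p.1 p.2 ^ e p

def monT (t : Exp k n × Exp k n × Exp k n) : TriFun F k n :=
  fun a b c => monV t.1 a * monV t.2.1 b * monV t.2.2 c

def degE (e : Exp k n) : ℕ := ∑ p, e p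

def degT (t : Exp k n × Exp k n × Exp k n) : ℕ := degE t.1 + degE t.2.1 + degE t.2.2

def spanDeg (F : Type*) [Field F] (k n : ℕ) (d : ℕ) : Submodule F (TriFun F k n) :=
  Submodule.span F {f | ∃ t, degT t ≤ d ∧ f = monT t}

abbrev ExpQ (q k n : ℕ) := (Fin k × Fin n) → Fin q
def toE (e : ExpQ q k n) : Exp k n := fun p => (e p : ℕ)
def toT (t : ExpQ q k n × ExpQ q k n × ExpQ q k n) : Exp k n × Exp k n × Exp k n :=
  (toE t.1, toE t.2.1, toE t.2.2)

lemma blockAct_one (v : Fin k → Fin n → F) : blockAct 1 v = v := by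
  funext j
  simp [blockAct, Matrix.one_apply]

lemma blockAct_mul (M N : Matrix (Fin k) (Fin k) F) (v : Fin k → Fin n → F) :
    blockAct (M * N) v = blockAct M (blockAct N v) := by
  funext j
  simp only [blockAct, Matrix.mul_apply, Finset.smul_sum, smul_smul, Finset.sum_smul]
  rw [Finset.sum_comm]

lemma blockAct_zero (M : Matrix (Fin k) (Fin k) F) : blockAct M (0 : Fin k → Fin n → F) = 0 := by
  funext j; simp [blockAct]

lemma blockAct_addM (M N : Matrix (Fin k) (Fin k) F) (v : Fin k → Fin n → F) :
    blockAct (M + N) v = blockAct M v + blockAct N v := by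
  funext j
  simp [blockAct, Matrix.add_apply, add_smul, Finset.sum_add_distrib]

lemma blockAct_subM (M N : Matrix (Fin k) (Fin k) F) (v : Fin k → Fin n → F) :
    blockAct (M - N) v = blockAct M v - blockAct N v := by
  funext j
  simp [blockAct, Matrix.sub_apply, sub_smul, Finset.sum_sub_distrib]

lemma blockAct_sub (M : Matrix (Fin k) (Fin k) F) (u v : Fin k → Fin n → F) :
    blockAct M (u - v) = blockAct M u - blockAct M v := by
  funext j
  simp [blockAct, smul_sub, Finset.sum_sub_distrib]

lemma blockAct_eq_zero {M : Matrix (Fin k) (Fin k) F} (hM : IsUnit M)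
    {d : Fin k → Fin n → F} (h : blockAct M d = 0) : d = 0 := by
  have hdet : IsUnit M.det := (Matrix.isUnit_iff_isUnit_det M).1 hM
  have : blockAct M⁻¹ (blockAct M d) = d := by
    rw [← blockAct_mul, Matrix.nonsing_inv_mul M hdet, blockAct_one]
  rw [h, blockAct_zero] at this
  exact this.symm

/-- The key reduction: a pattern-free set has only trivial solutions to the linear equation. -/
lemma pattern_free {q : ℕ} (hq : Odd q) (M₁ M₂ : Matrix (Fin k) (Fin k) F)
    (h1 : IsUnit M₁) (h2 : IsUnit M₂) (h12 : IsUnit (M₁ - M₂))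
    (A : Finset (Fin k → (Fin n → F)))
    (hA : ∀ x d : Fin k → (Fin n → F),
      x ≠ x + blockAct M₁ d → x ≠ x + blockAct M₂ d →
      x + blockAct M₁ d ≠ x + blockAct M₂ d →
      ¬(x ∈ A ∧ x + blockAct M₁ d ∈ A ∧ x + blockAct M₂ d ∈ A))
    {a b c : Fin k → Fin n → F} (ha : a ∈ A) (hb : b ∈ A) (hc : c ∈ A)
    (heq : blockAct (1 - M₂ * M₁⁻¹) a + blockAct (M₂ * M₁⁻¹) b = c) :
    a = b ∧ a = c := by
  have hdet1 : IsUnit M₁.det := (Matrix.isUnit_iff_isUnit_det M₁).1 h1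
  set T := M₂ * M₁⁻¹ with hT
  set d := blockAct M₁⁻¹ (b - a) with hd
  have hM1d : blockAct M₁ d = b - a := by
    rw [hd, ← blockAct_mul, Matrix.mul_nonsing_inv M₁ hdet1, blockAct_one]
  have hM2d : blockAct M₂ d = c - a := by
    have : blockAct M₂ d = blockAct T (b - a) := by rw [hd, ← blockAct_mul, hT]
    rw [this, blockAct_sub]
    have := heq
    rw [blockAct_subM, blockAct_one] at this
    abel_nf
    abel_nf at this
    linear_combination (norm := abel_nf) this
  have hab : a = b := by
    by_contra hne
    have hd0 : d ≠ 0 := by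
      intro h0
      rw [h0, blockAct_zero] at hM1d
      exact hne (sub_eq_zero.mp hM1d.symm).symm
    have k1 : a ≠ a + blockAct M₁ d := by
      intro h
      have h0 : blockAct M₁ d = 0 := left_eq_add.mp h
      rw [hM1d] at h0
      exact hne (sub_eq_zero.mp h0).symm
    have k2 : a ≠ a + blockAct M₂ d := by
      intro h
      exact hd0 (blockAct_eq_zero h2 (left_eq_add.mp h))
    have k3 : a + blockAct M₁ d ≠ a + blockAct M₂ d := by
      intro h
      have h0 : blockAct (M₁ - M₂) d = 0 := by
        rw [blockAct_subM, sub_eq_zero]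
        exact add_left_cancel h
      exact hd0 (blockAct_eq_zero h12 h0)
    refine hA a d k1 k2 k3 ⟨ha, ?_, ?_⟩
    · rw [hM1d]; convert hb using 1; abel
    · rw [hM2d]; convert hc using 1; abel
  refine ⟨hab, ?_⟩
  rw [← hab] at heq
  rw [← heq, blockAct_subM, blockAct_one]
  abel

lemma monV_mul (e e' : Exp k n) : (monV e : Vkn F k n → F) * monV e' = monV (e + e') := by
  funext v
  simp [monV, pow_add, Finset.prod_mul_distrib]

lemma monT_mul (t t' : Exp k n × Exp k n × Exp k n) :
    (monT t : TriFun F k n) * monT t' = monT (t + t') := by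
  funext a b c
  have h1 := congrFun (monV_mul (F := F) t.1 t'.1) a
  have h2 := congrFun (monV_mul (F := F) t.2.1 t'.2.1) b
  have h3 := congrFun (monV_mul (F := F) t.2.2 t'.2.2) c
  simp only [Pi.mul_apply] at h1 h2 h3
  simp only [Pi.mul_apply, monT, Prod.fst_add, Prod.snd_add, ← h1, ← h2, ← h3]
  ring

lemma degT_add (t t' : Exp k n × Exp k n × Exp k n) : degT (t + t') = degT t + degT t' := by
  simp [degT, degE, Finset.sum_add_distrib]
  ring

lemma spanDeg_mono {d d' : ℕ} (h : d ≤ d') : spanDeg F k n d ≤ spanDeg F k n d' := by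
  apply Submodule.span_mono
  rintro f ⟨t, ht, rfl⟩
  exact ⟨t, ht.trans h, rfl⟩

lemma mul_mem_spanDeg {d₁ d₂ : ℕ} {f g : TriFun F k n}
    (hf : f ∈ spanDeg F k n d₁) (hg : g ∈ spanDeg F k n d₂) :
    f * g ∈ spanDeg F k n (d₁ + d₂) := by
  have h := Submodule.mul_mem_mul hf hg
  rw [spanDeg, spanDeg, Submodule.span_mul_span] at h
  refine Submodule.span_le.mpr ?_ h
  rintro x ⟨y, ⟨t, ht, rfl⟩, z, ⟨t', ht', rfl⟩, rfl⟩
  refine Submodule.subset_span ⟨t + t', ?_, by show (monT t : TriFun F k n) * monT t' = monT (t + t'); exact monT_mul t t'⟩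
  rw [degT_add]; omega

lemma monT_mem {d : ℕ} {t : Exp k n × Exp k n × Exp k n} (h : degT t ≤ d) :
    (monT t : TriFun F k n) ∈ spanDeg F k n d :=
  Submodule.subset_span ⟨t, h, rfl⟩

lemma monV_zero : (monV 0 : Vkn F k n → F) = fun _ => 1 := by
  funext v; simp [monV]

lemma monT_zero : (monT (0, 0, 0) : TriFun F k n) = 1 := by
  funext a b c
  simp [monT, monV_zero]

lemma const_mem_spanDeg (r : F) (d : ℕ) :
    (fun _ _ _ => r : TriFun F k n) ∈ spanDeg F k n d := by
  have : (fun _ _ _ => r : TriFun F k n) = r • monT (0, 0, 0) := by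
    rw [monT_zero]; funext a b c; simp
  rw [this]
  exact Submodule.smul_mem _ _ (monT_mem (by simp [degT, degE]))

lemma monV_single (p : Fin k × Fin n) (v : Vkn F k n) :
    monV (Pi.single p 1) v = v p.1 p.2 := by
  rw [monV, Finset.prod_eq_single p]
  · simp
  · intro q _ hq; simp [Pi.single_apply, hq]
  · simp

lemma coordA_mem (p : Fin k × Fin n) :
    (fun a _ _ => a p.1 p.2 : TriFun F k n) ∈ spanDeg F k n 1 := by
  have : (fun a _ _ => a p.1 p.2 : TriFun F k n) = monT (Pi.single p 1, 0, 0) := by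
    funext a b c
    simp [monT, monV_single, monV_zero]
  rw [this]
  exact monT_mem (by simp [degT, degE, Pi.single_apply])

lemma coordB_mem (p : Fin k × Fin n) :
    (fun _ b _ => b p.1 p.2 : TriFun F k n) ∈ spanDeg F k n 1 := by
  have : (fun _ b _ => b p.1 p.2 : TriFun F k n) = monT (0, Pi.single p 1, 0) := by
    funext a b c
    simp [monT, monV_single, monV_zero]
  rw [this]
  exact monT_mem (by simp [degT, degE, Pi.single_apply])

lemma coordC_mem (p : Fin k × Fin n) :
    (fun _ _ c => c p.1 p.2 : TriFun F k n) ∈ spanDeg F k n 1 := by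
  have : (fun _ _ c => c p.1 p.2 : TriFun F k n) = monT (0, 0, Pi.single p 1) := by
    funext a b c
    simp [monT, monV_single, monV_zero]
  rw [this]
  exact monT_mem (by simp [degT, degE, Pi.single_apply])

lemma pow_mem_spanDeg {d : ℕ} {f : TriFun F k n} (hf : f ∈ spanDeg F k n d) (e : ℕ) :
    f ^ e ∈ spanDeg F k n (d * e) := by
  induction e with
  | zero =>
      have h1 : (1 : TriFun F k n) ∈ spanDeg F k n 0 := by
        rw [← monT_zero]; exact monT_mem (by simp [degT, degE])
      simpa using h1
  | succ e ih =>
      rw [pow_succ, Nat.mul_succ]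
      exact mul_mem_spanDeg ih hf

lemma prod_mem_spanDeg {d : ℕ} (s : Finset (Fin k × Fin n)) (f : Fin k × Fin n → TriFun F k n)
    (hf : ∀ i ∈ s, f i ∈ spanDeg F k n d) :
    ∏ i ∈ s, f i ∈ spanDeg F k n (d * s.card) := by
  induction s using Finset.induction with
  | empty =>
      have h1 : (1 : TriFun F k n) ∈ spanDeg F k n 0 := by
        rw [← monT_zero]; exact monT_mem (by simp [degT, degE])
      simpa using h1
  | @insert x s' hx ih =>
      rw [Finset.prod_insert hx, Finset.card_insert_of_notMem hx, Nat.mul_succ, add_comm]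
      exact mul_mem_spanDeg (hf x (Finset.mem_insert_self x s'))
        (ih fun i hi => hf i (Finset.mem_insert_of_mem hi))

def rExp (q t : ℕ) : ℕ := if t = 0 then 0 else (t - 1) % (q - 1) + 1

lemma rExp_le_self (hq : 2 ≤ q) (t : ℕ) : rExp q t ≤ t := by
  rw [rExp]
  split
  · omega
  · have := Nat.mod_le (t - 1) (q - 1); omega

lemma rExp_lt_q (hq : 2 ≤ q) (t : ℕ) : rExp q t < q := by
  rw [rExp]
  split
  · omega
  · have := Nat.mod_lt (t - 1) (y := q - 1) (by omega); omega

lemma pow_rExp [Fintype F] (hcard : Fintype.card F = q) (hq : 2 ≤ q) (x : F) (t : ℕ) :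
    x ^ t = x ^ rExp q t := by
  rcases Nat.eq_zero_or_pos t with rfl | ht
  · simp [rExp]
  rcases eq_or_ne x 0 with rfl | hx
  · rw [zero_pow (by omega), zero_pow]
    rw [rExp]; split <;> omega
  · have h1 : x ^ (q - 1) = 1 := by
      rw [← hcard]; exact FiniteField.pow_card_sub_one_eq_one x hx
    have hdm := Nat.div_add_mod (t - 1) (q - 1)
    have ht' : t = (q - 1) * ((t - 1) / (q - 1)) + rExp q t := by
      rw [rExp]; split
      · omega
      · omega
    nth_rewrite 1 [ht']
    rw [pow_add, pow_mul, h1, one_pow, one_mul]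

def reduceE (q : ℕ) (e : Exp k n) : Exp k n := fun p => rExp q (e p)

lemma monV_reduce [Fintype F] (hcard : Fintype.card F = q) (hq : 2 ≤ q) (e : Exp k n) :
    (monV e : Vkn F k n → F) = monV (reduceE q e) := by
  funext v
  exact Finset.prod_congr rfl fun p _ => pow_rExp hcard hq _ _

lemma exists_rep [Fintype F] (hcard : Fintype.card F = q) (hq : 2 ≤ q)
    {P : TriFun F k n} {d : ℕ} (hP : P ∈ spanDeg F k n d) :
    ∃ coef : (ExpQ q k n × ExpQ q k n × ExpQ q k n) → F,
      P = ∑ t ∈ Finset.univ.filter (fun t => degT (toT t) ≤ d),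
            coef t • monT (toT t) := by
  have hq0 : 0 < q := by omega
  classical
  set g : (ExpQ q k n × ExpQ q k n × ExpQ q k n) → TriFun F k n :=
    fun t => if degT (toT t) ≤ d then monT (toT t) else 0 with hg
  have hsub : {f : TriFun F k n | ∃ t, degT t ≤ d ∧ f = monT t} ⊆ Set.range g := by
    rintro f ⟨t, ht, rfl⟩
    refine ⟨(fun p => ⟨rExp q (t.1 p), rExp_lt_q hq _⟩,
            fun p => ⟨rExp q (t.2.1 p), rExp_lt_q hq _⟩,
            fun p => ⟨rExp q (t.2.2 p), rExp_lt_q hq _⟩), ?_⟩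
    have htT : toT (fun p => (⟨rExp q (t.1 p), rExp_lt_q hq _⟩ : Fin q),
            fun p => ⟨rExp q (t.2.1 p), rExp_lt_q hq _⟩,
            fun p => ⟨rExp q (t.2.2 p), rExp_lt_q hq _⟩)
        = (reduceE q t.1, reduceE q t.2.1, reduceE q t.2.2) := rfl
    have hdeg : degT (reduceE q t.1, reduceE q t.2.1, reduceE q t.2.2) ≤ d := by
      refine le_trans ?_ ht
      have h1 : ∀ e : Exp k n, degE (reduceE q e) ≤ degE e := fun e =>
        Finset.sum_le_sum (fun p _ => rExp_le_self hq _)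
      exact Nat.add_le_add (Nat.add_le_add (h1 _) (h1 _)) (h1 _)
    have hmon : (monT t : TriFun F k n)
        = monT (reduceE q t.1, reduceE q t.2.1, reduceE q t.2.2) := by
      unfold monT
      rw [← monV_reduce hcard hq, ← monV_reduce hcard hq, ← monV_reduce hcard hq]
    rw [hg]
    simp only [htT, hdeg, if_pos]
    exact hmon.symm
  have hP' : P ∈ Submodule.span F (Set.range g) :=
    (Submodule.span_mono hsub) hP
  obtain ⟨c, hc⟩ := (Submodule.mem_span_range_iff_exists_fun F).1 hP'
  refine ⟨c, ?_⟩
  rw [← hc, ← Finset.sum_filter_add_sum_filter_not Finset.univ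
    (fun t => degT (toT t) ≤ d) (fun t => c t • g t)]
  have hz : ∑ t ∈ Finset.univ.filter (fun t => ¬ degT (toT t) ≤ d), c t • g t = 0 := by
    apply Finset.sum_eq_zero
    intro t ht
    rw [Finset.mem_filter] at ht
    rw [hg]; simp [ht.2]
  rw [hz, add_zero]
  apply Finset.sum_congr rfl
  intro t ht
  rw [Finset.mem_filter] at ht
  rw [hg]; simp [ht.2]

section Support

variable {F : Type*} [Field F] {α : Type*} [Fintype α] [DecidableEq α] [DecidableEq F]

lemma interp_aux : ∀ (d : ℕ) (W : Submodule F (α → F)), Module.finrank F W = d →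
    ∃ S : Finset α, S.card = d ∧ ∀ f : α → F, ∃ v ∈ W, ∀ i ∈ S, v i = f i := by
  intro d
  induction d with
  | zero =>
      intro W _
      exact ⟨∅, rfl, fun f => ⟨0, W.zero_mem, fun i hi => absurd hi (by simp)⟩⟩
  | succ d ih =>
      intro W hW
      have hbot : W ≠ ⊥ := by
        intro h
        rw [h, finrank_bot] at hW
        omega
      obtain ⟨w, hwW, hw0⟩ := Submodule.ne_bot_iff W |>.1 hbot
      have : ∃ i₀, w i₀ ≠ 0 := by
        by_contra h
        push_neg at h
        exact hw0 (funext h)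
      obtain ⟨i₀, hi₀⟩ := this
      set φ : (α → F) →ₗ[F] F := LinearMap.proj i₀ with hφ
      set ψ : W →ₗ[F] F := φ.comp W.subtype with hψ
      have hsurj : Function.Surjective ψ := by
        intro c
        refine ⟨(c / w i₀) • ⟨w, hwW⟩, ?_⟩
        simp [hψ, hφ]
        field_simp
      have hrange : LinearMap.range ψ = ⊤ := LinearMap.range_eq_top.mpr hsurj
      have hker : Module.finrank F (LinearMap.ker ψ) = d := by
        have := LinearMap.finrank_range_add_finrank_ker ψ
        rw [hrange, finrank_top, Module.finrank_self, hW] at this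
        omega
      set W' : Submodule F (α → F) := (LinearMap.ker ψ).map W.subtype with hW'
      have hW'rank : Module.finrank F W' = d := by
        rw [hW', Submodule.finrank_map_subtype_eq]
        exact hker
      have hW'zero : ∀ v ∈ W', v i₀ = 0 := by
        rintro v ⟨u, hu, rfl⟩
        exact hu
      have hW'le : W' ≤ W := Submodule.map_subtype_le _ _
      obtain ⟨S', hS'card, hS'⟩ := ih W' hW'rank
      have hi₀S' : i₀ ∉ S' := by
        intro hmem
        obtain ⟨v, hvW', hv⟩ := hS' (fun _ => 1)
        have := hv i₀ hmem
        rw [hW'zero v hvW'] at this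
        exact zero_ne_one this
      refine ⟨insert i₀ S', by rw [Finset.card_insert_of_notMem hi₀S', hS'card], ?_⟩
      intro f
      set u : α → F := (f i₀ / w i₀) • w with hu
      have huW : u ∈ W := W.smul_mem _ hwW
      have hui₀ : u i₀ = f i₀ := by
        rw [hu]; simp; field_simp
      obtain ⟨v', hv'W', hv'⟩ := hS' (f - u)
      refine ⟨u + v', W.add_mem huW (hW'le hv'W'), ?_⟩
      intro i hi
      rcases Finset.mem_insert.1 hi with rfl | hiS'
      · simp [Pi.add_apply, hui₀, hW'zero v' hv'W']
      · have := hv' i hiS'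
        simp only [Pi.sub_apply] at this
        simp [Pi.add_apply, this]

lemma exists_mem_with_support (W : Submodule F (α → F)) :
    ∃ v ∈ W, Module.finrank F W ≤ (Finset.univ.filter (fun i => v i ≠ 0)).card := by
  obtain ⟨S, hcard, hS⟩ := interp_aux (Module.finrank F W) W rfl
  obtain ⟨v, hvW, hv⟩ := hS (fun _ => 1)
  refine ⟨v, hvW, ?_⟩
  rw [← hcard]
  apply Finset.card_le_card
  intro i hi
  simp only [Finset.mem_filter, Finset.mem_univ, true_and]
  rw [hv i hi]
  exact one_ne_zero

section Slice

variable {F : Type*} [Field F] [DecidableEq F]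

/-- Generic slice-rank style bound: if the diagonal tensor on a finite index type `α`
has a decomposition into slices, then `card α` is at most the total number of slices. -/
lemma slice_rank_bound {α β : Type*} [Fintype α] [DecidableEq α] [Fintype β] [DecidableEq β]
    (Sa Sb Sc : Finset β)
    (fa : β → α → F) (ga : β → α → α → F)
    (fb : β → α → F) (gb : β → α → α → F)
    (fc : β → α → F) (gc : β → α → α → F)
    (hrep : ∀ x y z : α, (if x = y ∧ y = z then (1:F) else 0) =
      (∑ e ∈ Sa, fa e x * ga e y z) + (∑ e ∈ Sb, fb e y * gb e x z) +
      (∑ e ∈ Sc, fc e z * gc e x y)) :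
    Fintype.card α ≤ Sa.card + Sb.card + Sc.card := by
  classical
  -- the linear conditions map
  set Λ : (α → F) →ₗ[F] (↥Sc → F) :=
    { toFun := fun h => fun e => ∑ z, fc e z * h z
      map_add' := by
        intro h₁ h₂
        funext e
        simp [mul_add, Finset.sum_add_distrib]
      map_smul' := by
        intro r h₁
        funext e
        simp [Finset.mul_sum]
        apply Finset.sum_congr rfl
        intro z _
        ring } with hΛ
  set W := LinearMap.ker Λ with hW
  have hWrank : Fintype.card α ≤ Module.finrank F W + Sc.card := by
    rw [hW]
    have h1 := LinearMap.finrank_range_add_finrank_ker Λ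
    have h2 : Module.finrank F (α → F) = Fintype.card α := Module.finrank_pi F
    have h3 : Module.finrank F (LinearMap.range Λ) ≤ Sc.card := by
      refine le_trans (Submodule.finrank_le _) ?_
      rw [Module.finrank_pi F, Fintype.card_coe]
    omega
  obtain ⟨h, hhW, hhsupp⟩ := exists_mem_with_support W
  set T : Finset α := Finset.univ.filter (fun i => h i ≠ 0) with hT
  -- the vanishing of the `c`-side conditions
  have hcz : ∀ e ∈ Sc, ∑ z, fc e z * h z = 0 := by
    intro e he
    have := hhW
    rw [hW, LinearMap.mem_ker] at this
    exact congrFun this ⟨e, he⟩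
  -- rows
  set Ga : β → α → F := fun e => fun y => ∑ z, ga e y z * h z with hGa
  set B : Finset (α → F) := Sa.image Ga ∪ Sb.image fb with hB
  have hrow : ∀ x : α, (Pi.single x (h x) : α → F) =
      (∑ e ∈ Sa, fa e x • Ga e) + ∑ e ∈ Sb, (∑ z, gb e x z * h z) • fb e := by
    intro x
    funext y
    have := fun z => hrep x y z
    calc (Pi.single x (h x) : α → F) y = ∑ z, (if x = y ∧ y = z then (1:F) else 0) * h z := by
          rcases eq_or_ne x y with rfl | hxy
          · rw [Finset.sum_eq_single x]
            · simp [Pi.single_apply]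
            · intro z _ hz; simp [Ne.symm hz]
            · simp
          · rw [Finset.sum_eq_zero]
            · simp [Pi.single_apply, Ne.symm hxy]
            · intro z _; simp [hxy]
      _ = ∑ z, ((∑ e ∈ Sa, fa e x * ga e y z) + (∑ e ∈ Sb, fb e y * gb e x z) +
            (∑ e ∈ Sc, fc e z * gc e x y)) * h z := by
          apply Finset.sum_congr rfl
          intro z _
          rw [hrep x y z]
      _ = ((∑ e ∈ Sa, fa e x • Ga e) + ∑ e ∈ Sb, (∑ z, gb e x z * h z) • fb e) y := by
          simp only [add_mul, Finset.sum_add_distrib, Finset.sum_mul]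
          rw [Finset.sum_comm (s := Finset.univ) (t := Sa)]
          rw [Finset.sum_comm (s := Finset.univ) (t := Sb)]
          rw [Finset.sum_comm (s := Finset.univ) (t := Sc)]
          have hc0 : ∑ e ∈ Sc, ∑ z, fc e z * gc e x y * h z = 0 := by
            apply Finset.sum_eq_zero
            intro e he
            have : ∑ z, fc e z * gc e x y * h z = gc e x y * ∑ z, fc e z * h z := by
              rw [Finset.mul_sum]
              apply Finset.sum_congr rfl
              intro z _; ring
            rw [this, hcz e he, mul_zero]
          rw [hc0, add_zero]
          simp only [Pi.add_apply, Finset.sum_apply, Pi.smul_apply, smul_eq_mul, hGa]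
          congr 1
          · apply Finset.sum_congr rfl
            intro e _
            rw [Finset.mul_sum]
            apply Finset.sum_congr rfl
            intro z _; ring
          · apply Finset.sum_congr rfl
            intro e _
            rw [Finset.sum_mul]
            apply Finset.sum_congr rfl
            intro z _; ring
  have hrow_mem : ∀ x : α, (Pi.single x (h x) : α → F) ∈ Submodule.span F (B : Set (α → F)) := by
    intro x
    rw [hrow x]
    apply Submodule.add_mem
    · apply Submodule.sum_mem
      intro e he
      exact Submodule.smul_mem _ _ (Submodule.subset_span
        (by simp only [hB, Finset.coe_union, Set.mem_union]
            exact Or.inl (by exact_mod_cast Finset.mem_image_of_mem Ga he)))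
    · apply Submodule.sum_mem
      intro e he
      exact Submodule.smul_mem _ _ (Submodule.subset_span
        (by simp only [hB, Finset.coe_union, Set.mem_union]
            exact Or.inr (by exact_mod_cast Finset.mem_image_of_mem fb he)))
  have hsingle_mem : ∀ x ∈ T, (Pi.single x 1 : α → F) ∈ Submodule.span F (B : Set (α → F)) := by
    intro x hx
    rw [hT, Finset.mem_filter] at hx
    have : (Pi.single x 1 : α → F) = (h x)⁻¹ • (Pi.single x (h x) : α → F) := by
      funext y
      simp only [Pi.single_apply, Pi.smul_apply, smul_eq_mul]
      split
      · rw [inv_mul_cancel₀ hx.2]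
      · rw [mul_zero]
    rw [this]
    exact Submodule.smul_mem _ _ (hrow_mem x)
  -- linear independence gives T.card ≤ finrank span B
  have hTcard : T.card ≤ Sa.card + Sb.card := by
    have hind : LinearIndependent F (fun x : ↥T => (Pi.single (x : α) 1 : α → F)) := by
      have h1 : LinearIndependent F (fun x : α => (Pi.single x 1 : α → F)) := by
        have := (Pi.basisFun F α).linearIndependent
        convert this using 1
        funext x
        rw [Pi.basisFun_apply]
      exact h1.comp _ Subtype.val_injective
    have hind' : LinearIndependent F (fun x : ↥T =>
        (⟨Pi.single (x : α) 1, hsingle_mem x x.2⟩ : ↥(Submodule.span F (B : Set (α → F))))) := by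
      apply LinearIndependent.of_comp (Submodule.span F (B : Set (α → F))).subtype
      exact hind
    have := hind'.fintype_card_le_finrank
    rw [Fintype.card_coe] at this
    refine le_trans this (le_trans (finrank_span_finset_le_card B) ?_)
    refine le_trans (Finset.card_union_le _ _) ?_
    exact Nat.add_le_add (Finset.card_image_le) (Finset.card_image_le)
  omega

end Slice

end Support

lemma count_bound {q k n : ℕ} (hq : 2 ≤ q) (hk : 0 < k) (hn : 0 < n) :
    ((Finset.univ.filter
        (fun e : ExpQ q k n => degE (toE e) ≤ ((q-1)*(k*n))/3)).card : ℝ) ≤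
    (sInf ((fun x : ℝ => (1 - x ^ q) / (x ^ (((q : ℝ) - 1) / 3) * (1 - x))) ''
      Set.Ioo (0:ℝ) 1)) ^ (k*n) := by
  classical
  set m := k * n with hm
  have hm0 : 0 < m := Nat.mul_pos hk hn
  set D := ((q-1)*m)/3 with hD
  set N := (Finset.univ.filter (fun e : ExpQ q k n => degE (toE e) ≤ D)).card with hN
  set f : ℝ → ℝ := fun x => (1 - x ^ q) / (x ^ (((q : ℝ) - 1) / 3) * (1 - x)) with hf
  set r : ℝ := ((q : ℝ) - 1) / 3 with hr
  have key : ∀ x ∈ Set.Ioo (0:ℝ) 1, (N:ℝ) ≤ (f x) ^ m ∧ 0 < f x := by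
    rintro x ⟨hx0, hx1⟩
    set G : ℝ := ∑ j ∈ Finset.range q, x ^ j with hG
    have hGpos : 0 < G := by
      apply Finset.sum_pos
      · intro j _; positivity
      · exact Finset.nonempty_range_iff.mpr (by omega)
    have hxr : (0:ℝ) < x ^ r := Real.rpow_pos_of_pos hx0 r
    have hfx : f x = G / x ^ r := by
      have hgeom : G * (1 - x) = 1 - x ^ q := by
        have := geom_sum_mul x q
        rw [hG]; linarith [this]
      show (1 - x ^ q) / (x ^ r * (1 - x)) = G / x ^ r
      rw [← hgeom]
      rw [mul_comm (x ^ r) (1 - x), ← div_div, mul_div_assoc, div_self (by linarith), mul_one]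
    have hfpos : 0 < f x := by rw [hfx]; positivity
    refine ⟨?_, hfpos⟩
    -- the generating function identity
    have hprod : ∑ e : ExpQ q k n, x ^ (degE (toE e)) = G ^ m := by
      have h1 : ∀ e : ExpQ q k n, x ^ (degE (toE e)) = ∏ p, x ^ ((e p : ℕ)) := by
        intro e
        rw [degE, Finset.prod_pow_eq_pow_sum]
        rfl
      rw [Finset.sum_congr rfl (fun e _ => h1 e)]
      have h2 := Finset.prod_univ_sum (fun _ : Fin k × Fin n => (Finset.univ : Finset (Fin q)))
        (fun _ j => x ^ (j : ℕ))
      rw [Fintype.piFinset_univ] at h2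
      rw [← h2]
      have h3 : ∀ p : Fin k × Fin n, ∑ j : Fin q, x ^ (j:ℕ) = G := by
        intro p
        rw [hG, ← Fin.sum_univ_eq_sum_range]
      rw [Finset.prod_congr rfl (fun p _ => h3 p), Finset.prod_const]
      congr 1
      simp [hm]
    have hstep : (N:ℝ) * x ^ D ≤ G ^ m := by
      rw [← hprod, ← Finset.sum_filter_add_sum_filter_not Finset.univ
        (fun e : ExpQ q k n => degE (toE e) ≤ D)]
      have h4 : (N:ℝ) * x ^ D = ∑ e ∈ Finset.univ.filter
          (fun e : ExpQ q k n => degE (toE e) ≤ D), x ^ D := by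
        rw [Finset.sum_const, hN, nsmul_eq_mul]
      rw [h4]
      have h5 : ∑ e ∈ Finset.univ.filter (fun e : ExpQ q k n => degE (toE e) ≤ D), (x:ℝ) ^ D ≤
          ∑ e ∈ Finset.univ.filter (fun e : ExpQ q k n => degE (toE e) ≤ D), x ^ (degE (toE e)) := by
        apply Finset.sum_le_sum
        intro e he
        rw [Finset.mem_filter] at he
        exact pow_le_pow_of_le_one hx0.le hx1.le he.2
      refine le_trans h5 (le_add_of_nonneg_right ?_)
      apply Finset.sum_nonneg
      intro e _; positivity
    -- now compare x^D with x^(r*m)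
    have hDle : (D:ℝ) ≤ r * m := by
      have h6 : 3 * D ≤ (q-1)*m := by
        rw [hD]
        omega
      have h7 : ((q-1:ℕ):ℝ) = (q:ℝ) - 1 := by
        rw [Nat.cast_sub (by omega)]; norm_num
      rw [hr]
      rw [div_mul_eq_mul_div, le_div_iff₀ (by norm_num)]
      calc (D:ℝ) * 3 = ((3 * D : ℕ) : ℝ) := by push_cast; ring
        _ ≤ (((q-1)*m : ℕ) : ℝ) := by exact_mod_cast h6
        _ = ((q:ℝ)-1) * m := by push_cast [h7]; ring
    have hxe : x ^ (r * (m:ℝ)) ≤ x ^ (D:ℝ) :=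
      Real.rpow_le_rpow_of_exponent_ge hx0 hx1.le hDle
    have hxD : x ^ (D:ℝ) = x ^ D := Real.rpow_natCast x D
    have hxrm : x ^ (r * (m:ℝ)) = (x ^ r) ^ m := by
      rw [Real.rpow_mul hx0.le, Real.rpow_natCast]
    have hfinal : (N:ℝ) ≤ G ^ m / (x ^ r) ^ m := by
      have hxDpos : (0:ℝ) < x ^ D := by positivity
      have h8 : (N:ℝ) ≤ G ^ m / x ^ D := by
        rw [le_div_iff₀ hxDpos]
        exact hstep
      refine le_trans h8 ?_
      apply div_le_div_of_nonneg_left (by positivity) (by positivity)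
      rw [← hxD, ← hxrm]
      exact hxe
    rw [hfx, div_pow]
    exact hfinal
  -- pass to the infimum
  set c := sInf (f '' Set.Ioo (0:ℝ) 1) with hc
  have hne : (f '' Set.Ioo (0:ℝ) 1).Nonempty :=
    ⟨f (1/2), ⟨1/2, by norm_num, rfl⟩⟩
  have h1 : (N:ℝ) ^ ((m:ℝ)⁻¹) ≤ c := by
    apply le_csInf hne
    rintro y ⟨x, hx, rfl⟩
    obtain ⟨hNle, hfpos⟩ := key x hx
    calc (N:ℝ) ^ ((m:ℝ)⁻¹) ≤ ((f x) ^ m) ^ ((m:ℝ)⁻¹) := by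
          apply Real.rpow_le_rpow (by positivity) hNle (by positivity)
      _ = f x := Real.pow_rpow_inv_natCast hfpos.le (by omega)
  calc (N:ℝ) = ((N:ℝ) ^ ((m:ℝ)⁻¹)) ^ m := (Real.rpow_inv_natCast_pow (by positivity) (by omega)).symm
    _ ≤ c ^ m := pow_le_pow_left₀ (by positivity) h1 m

def wFun (T : Matrix (Fin k) (Fin k) F) (a b : Vkn F k n) : Vkn F k n :=
  blockAct (1 - T) a + blockAct T b

def Pfun (T : Matrix (Fin k) (Fin k) F) (q : ℕ) : TriFun F k n :=
  fun a b c => ∏ p : Fin k × Fin n, (1 - (c p.1 p.2 - wFun T a b p.1 p.2) ^ (q - 1))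

lemma Pfun_delta [Fintype F] [DecidableEq F] (hcard : Fintype.card F = q) (hq : 2 ≤ q)
    (T : Matrix (Fin k) (Fin k) F) (a b c : Vkn F k n) :
    Pfun T q a b c = if c = wFun T a b then 1 else 0 := by
  rcases eq_or_ne c (wFun T a b) with heq | hne
  · rw [if_pos heq, Pfun]
    apply Finset.prod_eq_one
    intro p _
    rw [heq, sub_self, zero_pow (by omega), sub_zero]
  · rw [if_neg hne, Pfun]
    have : ∃ p : Fin k × Fin n, c p.1 p.2 ≠ wFun T a b p.1 p.2 := by
      by_contra h
      push_neg at h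
      exact hne (funext fun j => funext fun i => h (j, i))
    obtain ⟨p, hp⟩ := this
    apply Finset.prod_eq_zero (Finset.mem_univ p)
    rw [← hcard]
    rw [FiniteField.pow_card_sub_one_eq_one _ (sub_ne_zero_of_ne hp), sub_self]

lemma Pfun_mem (T : Matrix (Fin k) (Fin k) F) :
    (Pfun T q : TriFun F k n) ∈ spanDeg F k n ((q - 1) * (k * n)) := by
  have hfac : ∀ p : Fin k × Fin n,
      (fun a b c => 1 - (c p.1 p.2 - wFun T a b p.1 p.2) ^ (q-1) : TriFun F k n)
        ∈ spanDeg F k n (q - 1) := by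
    intro p
    have hL : (fun a b c => c p.1 p.2 - wFun T a b p.1 p.2 : TriFun F k n)
        ∈ spanDeg F k n 1 := by
      have hexp : (fun a b c => c p.1 p.2 - wFun T a b p.1 p.2 : TriFun F k n)
          = (fun _ _ c => c p.1 p.2 : TriFun F k n)
            - (∑ s : Fin k, ((1 - T) p.1 s) • (fun a _ _ => a s p.2 : TriFun F k n))
            - (∑ s : Fin k, (T p.1 s) • (fun _ b _ => b s p.2 : TriFun F k n)) := by
        funext a b c
        simp only [Pi.sub_apply, Finset.sum_apply, Pi.smul_apply, smul_eq_mul]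
        rw [wFun]
        simp only [Pi.add_apply, blockAct]
        rw [Finset.sum_apply, Finset.sum_apply]
        simp only [Pi.smul_apply, smul_eq_mul]
        ring
      rw [hexp]
      apply Submodule.sub_mem
      apply Submodule.sub_mem
      · exact coordC_mem p
      · exact Submodule.sum_mem _ fun s _ => Submodule.smul_mem _ _ (coordA_mem (s, p.2))
      · exact Submodule.sum_mem _ fun s _ => Submodule.smul_mem _ _ (coordB_mem (s, p.2))
    have hpow := pow_mem_spanDeg hL (q - 1)
    rw [one_mul] at hpow
    have hrw : (fun a b c => 1 - (c p.1 p.2 - wFun T a b p.1 p.2) ^ (q-1) : TriFun F k n)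
        = (fun _ _ _ => (1:F)) - (fun a b c => c p.1 p.2 - wFun T a b p.1 p.2) ^ (q-1) := by
      funext a b c
      simp only [Pi.sub_apply, Pi.pow_apply]
    rw [hrw]
    exact Submodule.sub_mem _ (const_mem_spanDeg 1 (q-1)) hpow
  have hP : (Pfun T q : TriFun F k n) =
      ∏ p : Fin k × Fin n, (fun a b c => 1 - (c p.1 p.2 - wFun T a b p.1 p.2) ^ (q-1)) := by
    funext a b c
    rw [Pfun]
    rw [Finset.prod_apply, Finset.prod_apply, Finset.prod_apply]
  rw [hP]
  have := prod_mem_spanDeg Finset.univ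
    (fun p => (fun a b c => 1 - (c p.1 p.2 - wFun T a b p.1 p.2) ^ (q-1) : TriFun F k n))
    (fun p _ => hfac p)
  convert this using 2
  simp [Fintype.card_prod]

end EGaux

set_option maxHeartbeats 1600000 in
theorem stmt11 {q k n : ℕ} (hq : Odd q) (hpp : IsPrimePow q) (hk : 0 < k) (hn : 0 < n)
    (F : Type*) [Field F] [Fintype F] (hcard : Fintype.card F = q)
    (M₁ M₂ : Matrix (Fin k) (Fin k) F)
    (h1 : IsUnit M₁) (h2 : IsUnit M₂) (h12 : IsUnit (M₁ - M₂))
    (A : Finset (Fin k → (Fin n → F)))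
    (hA : ∀ x d : Fin k → (Fin n → F),
      x ≠ x + blockAct M₁ d → x ≠ x + blockAct M₂ d →
      x + blockAct M₁ d ≠ x + blockAct M₂ d →
      ¬(x ∈ A ∧ x + blockAct M₁ d ∈ A ∧ x + blockAct M₂ d ∈ A)) :
    (A.card : ℝ) ≤ 3 *
      (sInf ((fun x : ℝ => (1 - x ^ q) / (x ^ (((q : ℝ) - 1) / 3) * (1 - x))) ''
        Set.Ioo (0 : ℝ) 1)) ^ (k * n) := by
  classical
  have hq2 : 2 ≤ q := hpp.two_le
  obtain ⟨coef, hcoef⟩ := EGaux.exists_rep hcard hq2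
    (EGaux.Pfun_mem (q := q) (k := k) (n := n) (M₂ * M₁⁻¹))
  set Tall := Finset.univ.filter
      (fun t : EGaux.ExpQ q k n × EGaux.ExpQ q k n × EGaux.ExpQ q k n =>
        EGaux.degT (EGaux.toT t) ≤ (q-1)*(k*n)) with hTall
  set D := ((q-1)*(k*n))/3 with hD
  set Ta := Tall.filter (fun t => EGaux.degE (EGaux.toE t.1) ≤ D) with hTa
  set Tr := Tall.filter (fun t => ¬ EGaux.degE (EGaux.toE t.1) ≤ D) with hTr
  set Tb := Tr.filter (fun t => EGaux.degE (EGaux.toE t.2.1) ≤ D) with hTb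
  set Tc := Tr.filter (fun t => ¬ EGaux.degE (EGaux.toE t.2.1) ≤ D) with hTc
  set N := (Finset.univ.filter
      (fun e : EGaux.ExpQ q k n => EGaux.degE (EGaux.toE e) ≤ D)).card with hN
  -- the diagonal property of P on A
  have hdiag : ∀ x y z : ↥A,
      EGaux.Pfun (M₂ * M₁⁻¹) q (x : Fin k → Fin n → F) (y : _) (z : _)
        = if x = y ∧ y = z then 1 else 0 := by
    intro x y z
    have hiff : ((z : Fin k → Fin n → F) = EGaux.wFun (M₂ * M₁⁻¹)
        (x : Fin k → Fin n → F) (y : Fin k → Fin n → F)) ↔ (x = y ∧ y = z) := by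
      constructor
      · intro hzw
        have heq : blockAct (1 - M₂ * M₁⁻¹) (x : Fin k → Fin n → F)
            + blockAct (M₂ * M₁⁻¹) (y : Fin k → Fin n → F) = (z : Fin k → Fin n → F) := by
          rw [hzw]; rfl
        obtain ⟨hxy, hxz⟩ := EGaux.pattern_free hq M₁ M₂ h1 h2 h12 A hA x.2 y.2 z.2 heq
        exact ⟨Subtype.ext hxy, Subtype.ext (hxy.symm.trans hxz)⟩
      · rintro ⟨rfl, rfl⟩
        show (x : Fin k → Fin n → F) = EGaux.wFun _ (x : Fin k → Fin n → F) (x : Fin k → Fin n → F)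
        rw [EGaux.wFun, ← EGaux.blockAct_addM, sub_add_cancel, EGaux.blockAct_one]
    rw [EGaux.Pfun_delta hcard hq2, if_congr hiff rfl rfl]
  -- P as an explicit sum of monomials
  have hPsum : ∀ a b c : Fin k → Fin n → F, EGaux.Pfun (M₂ * M₁⁻¹) q a b c
      = ∑ t ∈ Tall, coef t * (EGaux.monV (EGaux.toE t.1) a *
          EGaux.monV (EGaux.toE t.2.1) b * EGaux.monV (EGaux.toE t.2.2) c) := by
    intro a b c
    have h := congrFun (congrFun (congrFun hcoef a) b) c
    rw [h, Finset.sum_apply, Finset.sum_apply, Finset.sum_apply]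
    apply Finset.sum_congr rfl
    intro t _
    simp only [Pi.smul_apply, smul_eq_mul]
    rfl
  -- splitting of the index set
  have hsplit : ∀ g : EGaux.ExpQ q k n × EGaux.ExpQ q k n × EGaux.ExpQ q k n → F,
      ∑ t ∈ Tall, g t = ∑ t ∈ Ta, g t + (∑ t ∈ Tb, g t + ∑ t ∈ Tc, g t) := by
    intro g
    rw [hTa, hTb, hTc, hTr,
      ← Finset.sum_filter_add_sum_filter_not Tall (fun t => EGaux.degE (EGaux.toE t.1) ≤ D) g,
      ← Finset.sum_filter_add_sum_filter_not
        (Tall.filter (fun t => ¬ EGaux.degE (EGaux.toE t.1) ≤ D))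
        (fun t => EGaux.degE (EGaux.toE t.2.1) ≤ D) g]
  -- the three grouped pieces
  set fa : EGaux.ExpQ q k n → ↥A → F := fun e x => EGaux.monV (EGaux.toE e) (x : _) with hfa
  set ga : EGaux.ExpQ q k n → ↥A → ↥A → F := fun e y z =>
    ∑ t ∈ Ta.filter (fun s => s.1 = e), coef t *
      (EGaux.monV (EGaux.toE t.2.1) (y : _) * EGaux.monV (EGaux.toE t.2.2) (z : _)) with hga'
  set gb : EGaux.ExpQ q k n → ↥A → ↥A → F := fun e x z =>
    ∑ t ∈ Tb.filter (fun s => s.2.1 = e), coef t *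
      (EGaux.monV (EGaux.toE t.1) (x : _) * EGaux.monV (EGaux.toE t.2.2) (z : _)) with hgb'
  set gc : EGaux.ExpQ q k n → ↥A → ↥A → F := fun e x y =>
    ∑ t ∈ Tc.filter (fun s => s.2.2 = e), coef t *
      (EGaux.monV (EGaux.toE t.1) (x : _) * EGaux.monV (EGaux.toE t.2.1) (y : _)) with hgc'
  have hga : ∀ x y z : ↥A, ∑ e ∈ Ta.image (fun t => t.1), fa e x * ga e y z
      = ∑ t ∈ Ta, coef t * (EGaux.monV (EGaux.toE t.1) (x : _) *
          EGaux.monV (EGaux.toE t.2.1) (y : _) * EGaux.monV (EGaux.toE t.2.2) (z : _)) := by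
    intro x y z
    apply Finset.sum_image'
    intro t ht
    rw [hfa, hga']
    simp only
    rw [Finset.mul_sum]
    apply Finset.sum_congr rfl
    intro t' ht'
    rw [Finset.mem_filter] at ht'
    rw [ht'.2]
    ring
  have hgb : ∀ x y z : ↥A, ∑ e ∈ Tb.image (fun t => t.2.1), fa e y * gb e x z
      = ∑ t ∈ Tb, coef t * (EGaux.monV (EGaux.toE t.1) (x : _) *
          EGaux.monV (EGaux.toE t.2.1) (y : _) * EGaux.monV (EGaux.toE t.2.2) (z : _)) := by
    intro x y z
    apply Finset.sum_image'
    intro t ht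
    rw [hfa, hgb']
    simp only
    rw [Finset.mul_sum]
    apply Finset.sum_congr rfl
    intro t' ht'
    rw [Finset.mem_filter] at ht'
    rw [ht'.2]
    ring
  have hgc : ∀ x y z : ↥A, ∑ e ∈ Tc.image (fun t => t.2.2), fa e z * gc e x y
      = ∑ t ∈ Tc, coef t * (EGaux.monV (EGaux.toE t.1) (x : _) *
          EGaux.monV (EGaux.toE t.2.1) (y : _) * EGaux.monV (EGaux.toE t.2.2) (z : _)) := by
    intro x y z
    apply Finset.sum_image'
    intro t ht
    rw [hfa, hgc']
    simp only
    rw [Finset.mul_sum]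
    apply Finset.sum_congr rfl
    intro t' ht'
    rw [Finset.mem_filter] at ht'
    rw [ht'.2]
    ring
  have hcardle : Fintype.card ↥A ≤ (Ta.image (fun t => t.1)).card
      + (Tb.image (fun t => t.2.1)).card + (Tc.image (fun t => t.2.2)).card := by
    apply EGaux.slice_rank_bound (Ta.image (fun t => t.1)) (Tb.image (fun t => t.2.1))
      (Tc.image (fun t => t.2.2)) fa ga fa gb fa gc
    intro x y z
    rw [← hdiag x y z, hPsum, hsplit, hga x y z, hgb x y z, hgc x y z]
    ring
  -- bounding the three image cardinalities by N
  have hSa : (Ta.image (fun t => t.1)).card ≤ N := by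
    rw [hN]
    apply Finset.card_le_card
    intro e he
    rw [Finset.mem_image] at he
    obtain ⟨t, ht, rfl⟩ := he
    rw [hTa, Finset.mem_filter] at ht
    exact Finset.mem_filter.mpr ⟨Finset.mem_univ _, ht.2⟩
  have hSb : (Tb.image (fun t => t.2.1)).card ≤ N := by
    rw [hN]
    apply Finset.card_le_card
    intro e he
    rw [Finset.mem_image] at he
    obtain ⟨t, ht, rfl⟩ := he
    rw [hTb, Finset.mem_filter] at ht
    exact Finset.mem_filter.mpr ⟨Finset.mem_univ _, ht.2⟩
  have hSc : (Tc.image (fun t => t.2.2)).card ≤ N := by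
    rw [hN]
    apply Finset.card_le_card
    intro e he
    rw [Finset.mem_image] at he
    obtain ⟨t, ht, rfl⟩ := he
    rw [hTc, Finset.mem_filter, hTr, Finset.mem_filter, hTall, Finset.mem_filter] at ht
    have hdt := ht.1.1.2
    have hdm := Nat.div_add_mod ((q-1)*(k*n)) 3
    have hmod : ((q-1)*(k*n)) % 3 < 3 := Nat.mod_lt _ (by norm_num)
    have hsum : EGaux.degT (EGaux.toT t) = EGaux.degE (EGaux.toE t.1)
        + EGaux.degE (EGaux.toE t.2.1) + EGaux.degE (EGaux.toE t.2.2) := rfl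
    have h1' := ht.1.2
    have h2' := ht.2
    refine Finset.mem_filter.mpr ⟨Finset.mem_univ _, ?_⟩
    omega
  have hAcard : A.card ≤ 3 * N := by
    have hcardA : Fintype.card ↥A = A.card := Fintype.card_coe A
    omega
  have hNb := EGaux.count_bound (q := q) (k := k) (n := n) hq2 hk hn
  rw [← hD] at hNb
  rw [← hN] at hNb
  calc (A.card : ℝ) ≤ 3 * (N : ℝ) := by exact_mod_cast hAcard
    _ ≤ 3 * (sInf ((fun x : ℝ => (1 - x ^ q) / (x ^ (((q : ℝ) - 1) / 3) * (1 - x))) ''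
        Set.Ioo (0 : ℝ) 1)) ^ (k * n) := by
        apply mul_le_mul_of_nonneg_left hNb (by norm_num)
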